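/- Let T ∈ Λ₁^∨ with T ∉ ϖ·Λ₁^∨, let λ ∈ F^×, and let y ∈ GSpin(V₁). If the Fourier coefficient S_T(Φ)(m(λ,y)) = ∫_{V₁} ψ(B(T,x))·Φ(n(x)·m(λ,y)) dx is nonzero, then val(y) = 0 (i.e., y ∈ Clif(Λ₁) ∖ ϖ·Clif(Λ₁)), λ ∈ O_F, and y⁻¹·ι(T)·y ∈ ι(Λ₁^∨). -/

import Mathlib

/- Setup: F a nonarchimedean local field (axiomatized via a subring `O`, uniformizer `ϖ`,
   residue cardinality `q` and absolute value `abv`);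
   `E` is `F` or a quadratic étale `F`-algebra with norm form `QE`;
   `V₁ = H₂ ⟂ ⋯ ⟂ H_n ⟂ V_E` realized concretely as `(Fin m → F × F) × E`
   (each `F × F` a hyperbolic plane), and `V = F e₁ ⊕ V₁ ⊕ F f₁` realized as
   `(F × F) × ((Fin m → F × F) × E)`. -/

open CliffordAlgebra QuadraticMap MeasureTheory

noncomputable section

variable {F : Type*} [Field F] {E : Type*} [CommRing E] [Algebra F E]

/-- The hyperbolic plane quadratic form `Q (a, b) = a * b` on `F × F`. -/
def hypForm (F : Type*) [Field F] : QuadraticForm F (F × F) :=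
  QuadraticMap.linMulLin (LinearMap.fst F F F) (LinearMap.snd F F F)

variable (m : ℕ) (QE : QuadraticForm F E)

/-- The quadratic form on `V₁ = H₂ ⟂ ⋯ ⟂ H_n ⟂ V_E`. -/
def QOne : QuadraticForm F ((Fin m → F × F) × E) :=
  (QuadraticMap.pi fun _ : Fin m => hypForm F).prod QE

/-- The quadratic form on `V = F e₁ ⊕ V₁ ⊕ F f₁`. -/
def QBig : QuadraticForm F ((F × F) × ((Fin m → F × F) × E)) :=
  (hypForm F).prod (QOne m QE)

/-- The isometric inclusion `V₁ → V`. -/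
def inclIsom : QOne m QE →qᵢ QBig m QE where
  toLinearMap := LinearMap.inr F (F × F) ((Fin m → F × F) × E)
  map_app' := by
    intro x
    simp [QBig, QuadraticMap.prod_apply, hypForm]

/-- The induced map `Clif(V₁) → Clif(V)`. -/
def emb : CliffordAlgebra (QOne m QE) →ₐ[F] CliffordAlgebra (QBig m QE) :=
  CliffordAlgebra.map (inclIsom m QE)

/-- The isotropic vector `e₁` of `V`. -/
def eOne : (F × F) × ((Fin m → F × F) × E) := ((1, 0), 0)

/-- The isotropic vector `f₁` of `V`. -/
def fOne : (F × F) × ((Fin m → F × F) × E) := ((0, 1), 0)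

/-- `n(x) = 1 + ι(f₁) ι(x) ∈ Clif(V)` for `x ∈ V₁`. -/
def nmap (x : (Fin m → F × F) × E) : CliffordAlgebra (QBig m QE) :=
  1 + ι (QBig m QE) (fOne m) * ι (QBig m QE) ((0 : F × F), x)

/-- `m(λ, y) = (ι(e₁)ι(f₁) + λ ι(f₁)ι(e₁)) · y ∈ Clif(V)` for `y ∈ Clif(V₁)`. -/
def mmap (lam : F) (y : CliffordAlgebra (QOne m QE)) : CliffordAlgebra (QBig m QE) :=
  (ι (QBig m QE) (eOne m) * ι (QBig m QE) (fOne m)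
    + lam • (ι (QBig m QE) (fOne m) * ι (QBig m QE) (eOne m))) * emb m QE y

/-- The lattice `Λ₁ = O e₂ ⊕ ⋯ ⊕ O e_n ⊕ O_E ⊕ O f_n ⊕ ⋯ ⊕ O f₂ ⊆ V₁`, where
`O_E` is the maximal `O`-order (= integral closure of `O`) in `E`. -/
def lat1 (O : Subring F) : Set ((Fin m → F × F) × E) :=
  {p | (∀ i, (p.1 i).1 ∈ O ∧ (p.1 i).2 ∈ O) ∧ p.2 ∈ integralClosure ↥O E}

/-- `Clif(Λ₁)`: the `O`-subalgebra of `Clif(V₁)` generated by `ι(Λ₁)`, realized as the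
subring generated by `ι(Λ₁)` together with the scalars `O`. -/
def clifLat1 (O : Subring F) : Subring (CliffordAlgebra (QOne m QE)) :=
  Subring.closure (ι (QOne m QE) '' lat1 m O ∪ (algebraMap F _) '' O)

/-- The lattice `Λ = O e₁ ⊕ Λ₁ ⊕ O f₁ ⊆ V`. -/
def latV (O : Subring F) : Set ((F × F) × ((Fin m → F × F) × E)) :=
  {p | p.1.1 ∈ O ∧ p.1.2 ∈ O ∧ p.2 ∈ lat1 m O}

/-- `Clif(Λ)`: the `O`-subalgebra of `Clif(V)` generated by `ι(Λ)`. -/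
def clifLatV (O : Subring F) : Subring (CliffordAlgebra (QBig m QE)) :=
  Subring.closure (ι (QBig m QE) '' latV m O ∪ (algebraMap F _) '' O)

/-- The dual lattice `Λ₁^∨ = {v ∈ V₁ : B(v, Λ₁) ⊆ O}`. -/
def lat1dual (O : Subring F) : Set ((Fin m → F × F) × E) :=
  {v | ∀ w ∈ lat1 m (O : Subring F), QuadraticMap.polar (QOne m QE) v w ∈ O}

end
noncomputable section Aux7

open CliffordAlgebra QuadraticMap MeasureTheory

section General

variable {F : Type*} [Field F] {M : Type*} [AddCommGroup M] [Module F M]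
  (Q : QuadraticForm F M)

theorem clifAux_one_ne_zero : (1 : CliffordAlgebra Q) ≠ 0 := by
  obtain ⟨B, hB⟩ :=
    LinearMap.BilinMap.toQuadraticMap_surjective ((0 : QuadraticForm F M) - Q)
  intro h
  have h2 := congrArg (changeForm hB) h
  rw [changeForm_one, map_zero] at h2
  exact one_ne_zero h2

theorem clifAux_ι_injective : Function.Injective (ι Q) := by
  obtain ⟨B, hB⟩ :=
    LinearMap.BilinMap.toQuadraticMap_surjective ((0 : QuadraticForm F M) - Q)
  intro v w h
  have h2 := congrArg (changeForm hB) h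
  rw [changeForm_ι, changeForm_ι] at h2
  exact (ExteriorAlgebra.ι_inj F v w).mp h2

theorem clifAux_algebraMap_injective :
    Function.Injective (algebraMap F (CliffordAlgebra Q)) := by
  have : Nontrivial (CliffordAlgebra Q) := ⟨1, 0, clifAux_one_ne_zero Q⟩
  exact (algebraMap F (CliffordAlgebra Q)).injective

end General

variable {F : Type*} [Field F] {E : Type*} [CommRing E] [Algebra F E]
variable (m : ℕ) (QE : QuadraticForm F E)

theorem QBig_apply' (v : (F × F) × ((Fin m → F × F) × E)) :
    QBig m QE v = v.1.1 * v.1.2 + QOne m QE v.2 := by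
  simp [QBig, hypForm, QuadraticMap.prod_apply]

/-- The operator on `Clif(V₁) × Clif(V₁)` associated to a vector of `V`. -/
def opOf (v : (F × F) × ((Fin m → F × F) × E)) :
    (CliffordAlgebra (QOne m QE) × CliffordAlgebra (QOne m QE)) →ₗ[F]
      (CliffordAlgebra (QOne m QE) × CliffordAlgebra (QOne m QE)) where
  toFun p := (ι (QOne m QE) v.2 * p.1 + v.1.1 • p.2,
    v.1.2 • p.1 - ι (QOne m QE) v.2 * p.2)
  map_add' p q := by
    simp only [Prod.fst_add, Prod.snd_add, mul_add, smul_add, Prod.mk_add_mk]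
    refine Prod.ext ?_ ?_ <;> abel
  map_smul' c p := by
    simp only [Prod.smul_fst, Prod.smul_snd, RingHom.id_apply, Prod.smul_mk,
      mul_smul_comm, smul_sub, smul_add, smul_comm c]

/-- The linear map `V → End(Clif(V₁) × Clif(V₁))`. -/
def repAux : ((F × F) × ((Fin m → F × F) × E)) →ₗ[F]
    Module.End F (CliffordAlgebra (QOne m QE) × CliffordAlgebra (QOne m QE)) where
  toFun := opOf m QE
  map_add' v w := by
    refine LinearMap.ext fun p => ?_
    simp only [opOf, LinearMap.coe_mk, AddHom.coe_mk, LinearMap.add_apply,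
      Prod.fst_add, Prod.snd_add, Prod.mk_add_mk, map_add, add_mul, add_smul]
    refine Prod.ext ?_ ?_ <;> abel
  map_smul' c v := by
    refine LinearMap.ext fun p => ?_
    simp only [opOf, LinearMap.coe_mk, AddHom.coe_mk, RingHom.id_apply,
      LinearMap.smul_apply, Prod.smul_fst, Prod.smul_snd, Prod.smul_mk,
      _root_.map_smul, smul_mul_assoc, smul_add, smul_sub, smul_smul, smul_eq_mul]

theorem repAux_sq (v : (F × F) × ((Fin m → F × F) × E)) :
    repAux m QE v * repAux m QE v
      = algebraMap F
          (Module.End F (CliffordAlgebra (QOne m QE) × CliffordAlgebra (QOne m QE)))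
          (QBig m QE v) := by
  refine LinearMap.ext fun p => ?_
  have hsq : ∀ u : CliffordAlgebra (QOne m QE),
      ι (QOne m QE) v.2 * (ι (QOne m QE) v.2 * u) = QOne m QE v.2 • u := by
    intro u
    rw [← mul_assoc, ι_sq_scalar, ← Algebra.smul_def]
  rw [Module.End.mul_apply, Module.algebraMap_end_apply, QBig_apply']
  simp only [repAux, opOf, LinearMap.coe_mk, AddHom.coe_mk]
  rw [Prod.smul_def]
  refine Prod.ext ?_ ?_ <;>
      simp only [mul_add, mul_sub, smul_add, smul_sub, hsq, mul_smul_comm, smul_smul] <;>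
    module

/-- The representation of `Clif(V)` on `Clif(V₁) × Clif(V₁)`. -/
def rep : CliffordAlgebra (QBig m QE) →ₐ[F]
    Module.End F (CliffordAlgebra (QOne m QE) × CliffordAlgebra (QOne m QE)) :=
  CliffordAlgebra.lift (QBig m QE) ⟨repAux m QE, repAux_sq m QE⟩

theorem rep_ι (v : (F × F) × ((Fin m → F × F) × E)) :
    rep m QE (ι (QBig m QE) v) = opOf m QE v := by
  unfold rep
  exact CliffordAlgebra.lift_ι_apply _ _ v

theorem rep_ι_apply (v : (F × F) × ((Fin m → F × F) × E))
    (p : CliffordAlgebra (QOne m QE) × CliffordAlgebra (QOne m QE)) :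
    rep m QE (ι (QBig m QE) v) p
      = (ι (QOne m QE) v.2 * p.1 + v.1.1 • p.2,
          v.1.2 • p.1 - ι (QOne m QE) v.2 * p.2) := by
  rw [rep_ι]; rfl

theorem inclIsom_apply (x : (Fin m → F × F) × E) :
    inclIsom m QE x = ((0 : F × F), x) := rfl

theorem rep_emb (c : CliffordAlgebra (QOne m QE)) :
    ∀ p, rep m QE (emb m QE c) p = (c * p.1, involute c * p.2) := by
  induction c using CliffordAlgebra.induction with
  | algebraMap r =>
    intro p
    rw [AlgHom.commutes, AlgHom.commutes, Module.algebraMap_end_apply]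
    rw [AlgHom.commutes]
    rw [Prod.smul_def]
    refine Prod.ext ?_ ?_ <;> simp [Algebra.smul_def]
  | ι v =>
    intro p
    rw [emb, CliffordAlgebra.map_apply_ι, rep_ι_apply, inclIsom_apply, involute_ι]
    refine Prod.ext ?_ ?_ <;> simp
  | mul a b ha hb =>
    intro p
    rw [map_mul, map_mul, Module.End.mul_apply, hb, ha, map_mul involute a b]
    refine Prod.ext ?_ ?_ <;> simp [mul_assoc]
  | add a b ha hb =>
    intro p
    rw [map_add, map_add, LinearMap.add_apply, ha, hb, map_add involute a b]
    refine Prod.ext ?_ ?_ <;> simp [add_mul]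

section Lattices

variable (O : Subring F)

theorem zero_mem_lat1 : (0 : (Fin m → F × F) × E) ∈ lat1 m O := by
  exact ⟨fun i => ⟨zero_mem O, zero_mem O⟩, Subalgebra.zero_mem _⟩

theorem ι_lat1_mem {v : (Fin m → F × F) × E} (hv : v ∈ lat1 m O) :
    ι (QOne m QE) v ∈ clifLat1 m QE O :=
  Subring.subset_closure (Or.inl ⟨v, hv, rfl⟩)

theorem algebraMap_mem_clifLat1 {a : F} (ha : a ∈ O) :
    algebraMap F (CliffordAlgebra (QOne m QE)) a ∈ clifLat1 m QE O :=
  Subring.subset_closure (Or.inr ⟨a, ha, rfl⟩)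

theorem smul_mem_clifLat1 {a : F} {c : CliffordAlgebra (QOne m QE)} (ha : a ∈ O)
    (hc : c ∈ clifLat1 m QE O) : a • c ∈ clifLat1 m QE O := by
  rw [Algebra.smul_def]
  exact mul_mem (algebraMap_mem_clifLat1 m QE O ha) hc

theorem ι_latV_mem {v : (F × F) × ((Fin m → F × F) × E)} (hv : v ∈ latV m O) :
    ι (QBig m QE) v ∈ clifLatV m QE O :=
  Subring.subset_closure (Or.inl ⟨v, hv, rfl⟩)

theorem algebraMap_mem_clifLatV {a : F} (ha : a ∈ O) :
    algebraMap F (CliffordAlgebra (QBig m QE)) a ∈ clifLatV m QE O :=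
  Subring.subset_closure (Or.inr ⟨a, ha, rfl⟩)

theorem eOne_mem_latV : eOne m (F := F) (E := E) ∈ latV m O :=
  ⟨one_mem O, zero_mem O, zero_mem_lat1 m O⟩

theorem fOne_mem_latV : fOne m (F := F) (E := E) ∈ latV m O :=
  ⟨zero_mem O, one_mem O, zero_mem_lat1 m O⟩

theorem emb_mem_clifLatV {c : CliffordAlgebra (QOne m QE)}
    (hc : c ∈ clifLat1 m QE O) : emb m QE c ∈ clifLatV m QE O := by
  have hle : clifLat1 m QE O
      ≤ Subring.comap (emb m QE : CliffordAlgebra (QOne m QE) →+* _)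
          (clifLatV m QE O) := by
    refine Subring.closure_le.mpr ?_
    rintro z (⟨v, hv, rfl⟩ | ⟨a, ha, rfl⟩)
    · refine Subring.mem_comap.mpr ?_
      show emb m QE (ι (QOne m QE) v) ∈ _
      rw [emb, CliffordAlgebra.map_apply_ι]
      exact ι_latV_mem m QE O ⟨zero_mem O, zero_mem O, hv⟩
    · refine Subring.mem_comap.mpr ?_
      show emb m QE (algebraMap F _ a) ∈ _
      rw [AlgHom.commutes]
      exact algebraMap_mem_clifLatV m QE O ha
  exact Subring.mem_comap.mp (hle hc)

/-- The subring of endomorphisms preserving `Clif(Λ₁) × Clif(Λ₁)`. -/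
def presRing : Subring
    (Module.End F (CliffordAlgebra (QOne m QE) × CliffordAlgebra (QOne m QE))) where
  carrier := {f | ∀ p, p.1 ∈ clifLat1 m QE O → p.2 ∈ clifLat1 m QE O →
    (f p).1 ∈ clifLat1 m QE O ∧ (f p).2 ∈ clifLat1 m QE O}
  zero_mem' := fun p _ _ => by
    simp only [LinearMap.zero_apply]
    exact ⟨zero_mem _, zero_mem _⟩
  one_mem' := fun p h1 h2 => by
    simp only [Module.End.one_apply]
    exact ⟨h1, h2⟩
  add_mem' := fun {f g} hf hg p h1 h2 => by
    simp only [LinearMap.add_apply, Prod.fst_add, Prod.snd_add]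
    exact ⟨add_mem (hf p h1 h2).1 (hg p h1 h2).1, add_mem (hf p h1 h2).2 (hg p h1 h2).2⟩
  neg_mem' := fun {f} hf p h1 h2 => by
    simp only [LinearMap.neg_apply, Prod.fst_neg, Prod.snd_neg]
    exact ⟨neg_mem (hf p h1 h2).1, neg_mem (hf p h1 h2).2⟩
  mul_mem' := fun {f g} hf hg p h1 h2 => by
    rw [Module.End.mul_apply]
    exact hf _ (hg p h1 h2).1 (hg p h1 h2).2

theorem rep_preserves {z : CliffordAlgebra (QBig m QE)} (hz : z ∈ clifLatV m QE O) :
    ∀ p, p.1 ∈ clifLat1 m QE O → p.2 ∈ clifLat1 m QE O →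
      (rep m QE z p).1 ∈ clifLat1 m QE O ∧ (rep m QE z p).2 ∈ clifLat1 m QE O := by
  have hle : clifLatV m QE O
      ≤ Subring.comap (rep m QE : CliffordAlgebra (QBig m QE) →+* _)
          (presRing m QE O) := by
    refine Subring.closure_le.mpr ?_
    rintro z (⟨v, hv, rfl⟩ | ⟨a, ha, rfl⟩)
    · refine Subring.mem_comap.mpr fun p h1 h2 => ?_
      show ((rep m QE (ι (QBig m QE) v)) p).1 ∈ _ ∧ ((rep m QE (ι (QBig m QE) v)) p).2 ∈ _
      rw [rep_ι_apply]
      exact ⟨add_mem (mul_mem (ι_lat1_mem m QE O hv.2.2) h1)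
          (smul_mem_clifLat1 m QE O hv.1 h2),
        sub_mem (smul_mem_clifLat1 m QE O hv.2.1 h1)
          (mul_mem (ι_lat1_mem m QE O hv.2.2) h2)⟩
    · refine Subring.mem_comap.mpr fun p h1 h2 => ?_
      show ((rep m QE (algebraMap F _ a)) p).1 ∈ _ ∧ ((rep m QE (algebraMap F _ a)) p).2 ∈ _
      rw [AlgHom.commutes, Module.algebraMap_end_apply, Prod.smul_def]
      exact ⟨smul_mem_clifLat1 m QE O ha h1, smul_mem_clifLat1 m QE O ha h2⟩
  exact Subring.mem_comap.mp (hle hz)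

end Lattices

theorem QBig_eOne : QBig m QE (eOne m (F := F) (E := E)) = 0 := by
  simp [QBig_apply', eOne]

theorem QBig_fOne : QBig m QE (fOne m (F := F) (E := E)) = 0 := by
  simp [QBig_apply', fOne]

theorem polar_eOne_fOne :
    QuadraticMap.polar (QBig m QE) (eOne m (F := F) (E := E)) (fOne m) = 1 := by
  simp [QuadraticMap.polar, QBig_apply', eOne, fOne]

theorem isOrtho_fOne_x (x : (Fin m → F × F) × E) :
    (QBig m QE).IsOrtho (((0 : F × F), x)) (fOne m) := by
  simp [QuadraticMap.IsOrtho, QBig_apply', fOne]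

theorem isOrtho_eOne_x (x : (Fin m → F × F) × E) :
    (QBig m QE).IsOrtho (((0 : F × F), x)) (eOne m) := by
  simp [QuadraticMap.IsOrtho, QBig_apply', eOne]

theorem nmap_mul_mmap (lam : F) (y : CliffordAlgebra (QOne m QE))
    (x : (Fin m → F × F) × E) :
    nmap m QE x * mmap m QE lam y
      = emb m QE (lam • y)
        + ι (QBig m QE) (eOne m) * (ι (QBig m QE) (fOne m) * emb m QE (y - lam • y))
        + ι (QBig m QE) (fOne m) * emb m QE (ι (QOne m QE) x * y) := by
  set E1 := ι (QBig m QE) (eOne m) with hE1def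
  set F1 := ι (QBig m QE) (fOne m) with hF1def
  set X := ι (QBig m QE) ((0 : F × F), x) with hXdef
  set Y := emb m QE y with hYdef
  have hFF : F1 * F1 = 0 := by rw [hF1def, ι_sq_scalar, QBig_fOne, map_zero]
  have hEF : E1 * F1 + F1 * E1 = 1 := by
    rw [hE1def, hF1def, ι_mul_ι_add_swap, polar_eOne_fOne, map_one]
  have hFE : F1 * E1 = 1 - E1 * F1 := by
    rw [← hEF]; abel
  have hXF : X * F1 = -(F1 * X) := ι_mul_ι_comm_of_isOrtho (isOrtho_fOne_x m QE x)
  have hXE : X * E1 = -(E1 * X) := ι_mul_ι_comm_of_isOrtho (isOrtho_eOne_x m QE x)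
  have hFXF : F1 * X * F1 = 0 := by
    rw [mul_assoc, hXF, mul_neg, ← mul_assoc, hFF, zero_mul, neg_zero]
  have h1 : F1 * X * (F1 * E1) = 0 := by
    rw [← mul_assoc, hFXF, zero_mul]
  have h2 : F1 * X * (E1 * F1) = F1 * X := by
    have s1 : F1 * X * (E1 * F1) = F1 * (X * E1) * F1 := by
      rw [mul_assoc F1 X (E1 * F1), ← mul_assoc X E1 F1, ← mul_assoc]
    rw [s1, hXE, mul_neg, neg_mul, mul_assoc F1 (E1 * X) F1, mul_assoc E1 X F1, hXF,
      mul_neg, mul_neg, neg_neg, ← mul_assoc E1 F1 X, ← mul_assoc F1 (E1 * F1) X,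
      ← mul_assoc F1 E1 F1, hFE, sub_mul, one_mul, mul_assoc E1 F1 F1, hFF, mul_zero,
      sub_zero]
  have hXemb : X = emb m QE (ι (QOne m QE) x) := by
    rw [emb, CliffordAlgebra.map_apply_ι, inclIsom_apply]
  have hXY : emb m QE (ι (QOne m QE) x * y) = X * Y := by
    rw [map_mul, hXemb]
  have hlamY : emb m QE (lam • y) = lam • Y := by rw [_root_.map_smul]
  have hsubY : emb m QE (y - lam • y) = Y - lam • Y := by
    rw [_root_.map_sub, _root_.map_smul]
  rw [hXY, hlamY, hsubY]
  show (1 + F1 * X) * ((E1 * F1 + lam • (F1 * E1)) * Y)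
    = lam • Y + E1 * (F1 * (Y - lam • Y)) + F1 * (X * Y)
  have step1 : (E1 * F1 + lam • (F1 * E1)) * Y
      = E1 * F1 * Y + F1 * E1 * (lam • Y) := by
    rw [add_mul, smul_mul_assoc, mul_smul_comm]
  rw [step1, one_add_mul, mul_add, ← mul_assoc (F1 * X) (E1 * F1) Y, h2,
    ← mul_assoc (F1 * X) (F1 * E1) (lam • Y), h1, zero_mul, add_zero,
    hFE, sub_mul, one_mul]
  have collect : E1 * (F1 * (Y - lam • Y)) = E1 * F1 * Y - E1 * F1 * (lam • Y) := by
    rw [mul_sub, mul_sub, ← mul_assoc, ← mul_assoc]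
  rw [collect, mul_assoc F1 X Y]
  abel

section MemIff

variable (O : Subring F)

theorem rep_fOne_apply (p : CliffordAlgebra (QOne m QE) × CliffordAlgebra (QOne m QE)) :
    rep m QE (ι (QBig m QE) (fOne m)) p = (0, p.1) := by
  rw [rep_ι_apply]
  refine Prod.ext ?_ ?_ <;> simp [fOne]

theorem rep_eOne_apply (p : CliffordAlgebra (QOne m QE) × CliffordAlgebra (QOne m QE)) :
    rep m QE (ι (QBig m QE) (eOne m)) p = (p.2, 0) := by
  rw [rep_ι_apply]
  refine Prod.ext ?_ ?_ <;> simp [eOne]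

theorem rep_nm_one_zero (lam : F) (y : CliffordAlgebra (QOne m QE))
    (x : (Fin m → F × F) × E) :
    rep m QE (nmap m QE x * mmap m QE lam y) (1, 0)
      = (y, ι (QOne m QE) x * y) := by
  rw [nmap_mul_mmap, map_add, map_add, map_mul, map_mul, map_mul]
  simp only [LinearMap.add_apply, Module.End.mul_apply]
  rw [rep_emb, rep_emb, rep_emb, rep_fOne_apply, rep_fOne_apply, rep_eOne_apply]
  simp only [mul_one, mul_zero]
  refine Prod.ext ?_ ?_ <;> simp <;> abel

theorem rep_nm_zero_one (lam : F) {y : CliffordAlgebra (QOne m QE)}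
    (hy : involute y = y) (x : (Fin m → F × F) × E) :
    rep m QE (nmap m QE x * mmap m QE lam y) (0, 1)
      = (0, lam • y) := by
  rw [nmap_mul_mmap, map_add, map_add, map_mul, map_mul, map_mul]
  simp only [LinearMap.add_apply, Module.End.mul_apply]
  rw [rep_emb, rep_emb, rep_emb, rep_fOne_apply, rep_fOne_apply, rep_eOne_apply]
  simp only [mul_one, mul_zero, _root_.map_smul, hy]
  refine Prod.ext ?_ ?_ <;> simp

theorem mem_clifLatV_imp {lam : F} {y : CliffordAlgebra (QOne m QE)}
    (hy : involute y = y) {x : (Fin m → F × F) × E}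
    (h : nmap m QE x * mmap m QE lam y ∈ clifLatV m QE O) :
    y ∈ clifLat1 m QE O ∧ lam • y ∈ clifLat1 m QE O ∧
      ι (QOne m QE) x * y ∈ clifLat1 m QE O := by
  have c1 := rep_preserves m QE O h (1, 0) (one_mem _) (zero_mem _)
  have c2 := rep_preserves m QE O h (0, 1) (zero_mem _) (one_mem _)
  rw [rep_nm_one_zero] at c1
  rw [rep_nm_zero_one m QE lam hy] at c2
  exact ⟨c1.1, c2.2, c1.2⟩

theorem mem_clifLatV_of {lam : F} {y : CliffordAlgebra (QOne m QE)}
    {x : (Fin m → F × F) × E}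
    (hy1 : y ∈ clifLat1 m QE O) (hy2 : lam • y ∈ clifLat1 m QE O)
    (hx : ι (QOne m QE) x * y ∈ clifLat1 m QE O) :
    nmap m QE x * mmap m QE lam y ∈ clifLatV m QE O := by
  rw [nmap_mul_mmap]
  refine add_mem (add_mem ?_ ?_) ?_
  · exact emb_mem_clifLatV m QE O hy2
  · exact mul_mem (ι_latV_mem m QE O (eOne_mem_latV m O))
      (mul_mem (ι_latV_mem m QE O (fOne_mem_latV m O))
        (emb_mem_clifLatV m QE O (sub_mem hy1 hy2)))
  · exact mul_mem (ι_latV_mem m QE O (fOne_mem_latV m O))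
      (emb_mem_clifLatV m QE O hx)

end MemIff

end Aux7

set_option maxHeartbeats 2000000 in
/-- Let `T ∈ Λ₁^∨ ∖ ϖ·Λ₁^∨`, `λ ∈ F^×`, `y ∈ GSpin(V₁)`. If the Fourier
coefficient `S_T(Φ)(m(λ,y)) = ∫_{V₁} ψ(B(T,x)) Φ(n(x) m(λ,y)) dx` is nonzero, then `val(y) = 0`
(i.e. `y ∈ Clif(Λ₁) ∖ ϖ·Clif(Λ₁)`), `λ ∈ O`, and `y⁻¹ ι(T) y ∈ ι(Λ₁^∨)`. -/
theorem statement7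
    {F : Type*} [Field F] {E : Type*} [CommRing E] [Algebra F E] [Module.Finite F E]
    -- F is a nonarchimedean local field:
    (O : Subring F) (ϖ : F) (q : ℕ) (abv : AbsoluteValue F ℝ)
    (hq : 1 < q)
    (hO : ∀ x : F, x ∈ O ↔ abv x ≤ 1)
    (hϖO : ϖ ∈ O)
    (habsϖ : abv ϖ = (q : ℝ)⁻¹)
    (hdisc : ∀ x : F, x ≠ 0 → ∃ k : ℤ, abv x = (q : ℝ) ^ k)
    (hres : Nat.card (↥O ⧸ Ideal.span {(⟨ϖ, hϖO⟩ : ↥O)}) = q)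
    -- E is F or a quadratic étale F-algebra, and QE is its norm form:
    (hE : Module.finrank F E = 1 ∨ (Module.finrank F E = 2 ∧ Algebra.IsSeparable F E))
    (QE : QuadraticForm F E) (hQE : ∀ t : E, QE t = Algebra.norm F t)
    (m : ℕ)
    -- the Haar measure on V₁, normalized so that μ(Λ₁) = 1:
    [MeasurableSpace ((Fin m → F × F) × E)] [MeasurableAdd ((Fin m → F × F) × E)]
    (μ : Measure ((Fin m → F × F) × E)) [μ.IsAddLeftInvariant]
    (hμ : μ (lat1 m O) = 1)
    -- ψ is an additive character of F, trivial on O and nontrivial on ϖ⁻¹·O: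
    (ψ : AddChar F ℂ)
    (hψ1 : ∀ x : F, x ∈ O → ψ x = 1)
    (hψ2 : ∃ x : F, ϖ * x ∈ O ∧ ψ x ≠ 1)
    -- T ∈ Λ₁^∨ ∖ ϖ·Λ₁^∨:
    (T : (Fin m → F × F) × E)
    (hT : T ∈ lat1dual m QE O)
    (hT' : ¬ ∃ w ∈ lat1dual m QE O, T = ϖ • w)
    -- λ ∈ F^×:
    (lam : F) (hlam : lam ≠ 0)
    -- y ∈ GSpin(V₁), with similitude ν(y) = νy:
    (y : (CliffordAlgebra (QOne m QE))ˣ)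
    (hyev : (↑y : CliffordAlgebra (QOne m QE)) ∈ CliffordAlgebra.evenOdd (QOne m QE) 0)
    (νy : F) (hνy : νy ≠ 0)
    (hν : CliffordAlgebra.reverse (Q := QOne m QE) ↑y * ↑y = algebraMap F _ νy)
    (hconj : ∀ v : (Fin m → F × F) × E, ∃ w : (Fin m → F × F) × E,
      (↑y⁻¹ : CliffordAlgebra (QOne m QE)) * CliffordAlgebra.ι (QOne m QE) v * ↑y
        = CliffordAlgebra.ι (QOne m QE) w)
    -- nonvanishing of the Fourier coefficient S_T(Φ)(m(λ, y)):
    (hFC : (∫ x : (Fin m → F × F) × E,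
        ψ (QuadraticMap.polar (QOne m QE) T x)
          * Set.indicator (clifLatV m QE O : Set (CliffordAlgebra (QBig m QE)))
              (fun _ => (1 : ℂ)) (nmap m QE x * mmap m QE lam ↑y) ∂μ) ≠ 0) :
    ((↑y : CliffordAlgebra (QOne m QE)) ∈ clifLat1 m QE O ∧
        ¬ ∃ z ∈ clifLat1 m QE O, (↑y : CliffordAlgebra (QOne m QE)) = ϖ • z) ∧
      lam ∈ O ∧
      ∃ T' ∈ lat1dual m QE O,
        (↑y⁻¹ : CliffordAlgebra (QOne m QE)) * CliffordAlgebra.ι (QOne m QE) T * ↑y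
          = CliffordAlgebra.ι (QOne m QE) T' := by
  classical
  -- basic numeric facts
  have hqR : (1 : ℝ) < (q : ℝ) := by exact_mod_cast hq
  have hq0 : (0 : ℝ) < (q : ℝ) := lt_trans zero_lt_one hqR
  have hϖ0 : ϖ ≠ 0 := by
    intro h
    rw [h, map_zero] at habsϖ
    have h2 : (0 : ℝ) < (q : ℝ)⁻¹ := by positivity
    rw [← habsϖ] at h2
    exact lt_irrefl _ h2
  have habv_ge : ∀ t : F, t ≠ 0 → 1 < abv t → (q : ℝ) ≤ abv t := by
    intro t ht0 ht1
    obtain ⟨k, hk⟩ := hdisc t ht0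
    have hk1 : (1 : ℤ) ≤ k := by
      by_contra hk'
      push_neg at hk'
      have hle : abv t ≤ 1 := by
        rw [hk]
        calc (q : ℝ) ^ k ≤ (q : ℝ) ^ (0 : ℤ) := zpow_le_zpow_right₀ hqR.le (by omega)
          _ = 1 := zpow_zero _
      exact absurd ht1 (not_lt.mpr hle)
    rw [hk]
    calc (q : ℝ) = (q : ℝ) ^ (1 : ℤ) := (zpow_one _).symm
      _ ≤ (q : ℝ) ^ k := zpow_le_zpow_right₀ hqR.le hk1
  have hyinv : involute (↑y : CliffordAlgebra (QOne m QE)) = ↑y :=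
    CliffordAlgebra.involute_eq_of_mem_even hyev
  -- Step 1: some point is in the support
  obtain ⟨x₀', hx₀'⟩ : ∃ x, ψ (QuadraticMap.polar (QOne m QE) T x)
      * Set.indicator (clifLatV m QE O : Set (CliffordAlgebra (QBig m QE)))
          (fun _ => (1 : ℂ)) (nmap m QE x * mmap m QE lam ↑y) ≠ 0 := by
    by_contra h
    push_neg at h
    apply hFC
    simp only [h]
    exact integral_zero _ _
  have hzmem : nmap m QE x₀' * mmap m QE lam ↑y ∈ clifLatV m QE O := by
    by_contra hn
    apply hx₀'
    rw [Set.indicator_of_notMem hn, mul_zero]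
  obtain ⟨hy1, hy2, -⟩ := mem_clifLatV_imp m QE O hyinv hzmem
  -- the support lattice S
  set S : Set ((Fin m → F × F) × E) :=
    {x | ι (QOne m QE) x * (↑y : CliffordAlgebra (QOne m QE)) ∈ clifLat1 m QE O}
    with hSdef
  have hSind : ∀ x, Set.indicator (clifLatV m QE O : Set (CliffordAlgebra (QBig m QE)))
      (fun _ => (1 : ℂ)) (nmap m QE x * mmap m QE lam ↑y)
        = Set.indicator S (fun _ => (1 : ℂ)) x := by
    intro x
    by_cases hx : x ∈ S
    · rw [Set.indicator_of_mem hx, Set.indicator_of_mem (mem_clifLatV_of m QE O hy1 hy2 hx)]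
    · rw [Set.indicator_of_notMem hx,
        Set.indicator_of_notMem (fun hc => hx (mem_clifLatV_imp m QE O hyinv hc).2.2)]
  rw [show (fun x => ψ (QuadraticMap.polar (QOne m QE) T x)
      * Set.indicator (clifLatV m QE O : Set (CliffordAlgebra (QBig m QE)))
          (fun _ => (1 : ℂ)) (nmap m QE x * mmap m QE lam ↑y))
      = fun x => ψ (QuadraticMap.polar (QOne m QE) T x)
          * Set.indicator S (fun _ => (1 : ℂ)) x from funext fun x => by rw [hSind]] at hFC
  -- translation invariance: the character is trivial on S
  have key : ∀ x₀ ∈ S, ψ (QuadraticMap.polar (QOne m QE) T x₀) = 1 := by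
    intro x₀ hx₀S
    have hshift : ∀ x, Set.indicator S (fun _ => (1 : ℂ)) (x₀ + x)
        = Set.indicator S (fun _ => (1 : ℂ)) x := by
      intro x
      by_cases hx : x ∈ S
      · have hmem : x₀ + x ∈ S := by
          show ι (QOne m QE) (x₀ + x) * (↑y : CliffordAlgebra (QOne m QE)) ∈ clifLat1 m QE O
          rw [map_add, add_mul]
          exact add_mem hx₀S hx
        rw [Set.indicator_of_mem hmem, Set.indicator_of_mem hx]
      · have hmem : x₀ + x ∉ S := by
          intro hc
          apply hx
          show ι (QOne m QE) x * (↑y : CliffordAlgebra (QOne m QE)) ∈ clifLat1 m QE O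
          have hix : ι (QOne m QE) x = ι (QOne m QE) (x₀ + x) - ι (QOne m QE) x₀ := by
            rw [map_add, add_sub_cancel_left]
          rw [hix, sub_mul]
          exact sub_mem hc hx₀S
        rw [Set.indicator_of_notMem hmem, Set.indicator_of_notMem hx]
    have htrans := integral_add_left_eq_self (μ := μ)
      (fun x => ψ (QuadraticMap.polar (QOne m QE) T x)
        * Set.indicator S (fun _ => (1 : ℂ)) x) x₀
    have hpt : (fun x => ψ (QuadraticMap.polar (QOne m QE) T (x₀ + x))
        * Set.indicator S (fun _ => (1 : ℂ)) (x₀ + x))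
        = fun x => ψ (QuadraticMap.polar (QOne m QE) T x₀)
            • (ψ (QuadraticMap.polar (QOne m QE) T x)
              * Set.indicator S (fun _ => (1 : ℂ)) x) := by
      funext x
      rw [QuadraticMap.polar_add_right, AddChar.map_add_eq_mul, hshift, smul_eq_mul,
        mul_assoc]
    rw [hpt, integral_smul] at htrans
    have hzero : (ψ (QuadraticMap.polar (QOne m QE) T x₀) - 1)
        • (∫ x, ψ (QuadraticMap.polar (QOne m QE) T x)
            * Set.indicator S (fun _ => (1 : ℂ)) x ∂μ) = 0 := by
      rw [sub_smul, one_smul, htrans, sub_self]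
    rcases smul_eq_zero.mp hzero with h | h
    · exact sub_eq_zero.mp h
    · exact absurd h hFC
  -- integrality of the character values on S
  have key2 : ∀ x₀ ∈ S, QuadraticMap.polar (QOne m QE) T x₀ ∈ O := by
    intro x₀ hx₀S
    by_contra htO
    set t := QuadraticMap.polar (QOne m QE) T x₀ with htdef
    have ht0 : t ≠ 0 := by
      intro h
      exact htO (h ▸ (hO 0).mpr (by rw [map_zero]; exact zero_le_one))
    have ht1 : 1 < abv t := not_le.mp fun h => htO ((hO t).mpr h)
    have htq : (q : ℝ) ≤ abv t := habv_ge t ht0 ht1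
    obtain ⟨x₁, hx₁O, hx₁ψ⟩ := hψ2
    have hx₁abv : abv x₁ ≤ (q : ℝ) := by
      have h1 : abv (ϖ * x₁) ≤ 1 := (hO _).mp hx₁O
      rw [map_mul, habsϖ] at h1
      have h2 := mul_le_mul_of_nonneg_left h1 hq0.le
      rwa [← mul_assoc, mul_inv_cancel₀ hq0.ne', one_mul, mul_one] at h2
    have hcO : x₁ / t ∈ O := by
      refine (hO _).mpr ?_
      rw [map_div₀]
      rw [div_le_one (lt_trans zero_lt_one ht1)]
      exact le_trans hx₁abv htq
    have hcx : (x₁ / t) • x₀ ∈ S := by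
      show ι (QOne m QE) ((x₁ / t) • x₀) * (↑y : CliffordAlgebra (QOne m QE)) ∈ clifLat1 m QE O
      rw [_root_.map_smul, smul_mul_assoc, Algebra.smul_def]
      exact mul_mem (algebraMap_mem_clifLat1 m QE O hcO) hx₀S
    have hk := key _ hcx
    rw [QuadraticMap.polar_smul_right, ← htdef, smul_eq_mul, div_mul_cancel₀ x₁ ht0] at hk
    exact hx₁ψ hk
  -- y is not divisible by ϖ
  have hnodiv : ¬∃ z ∈ clifLat1 m QE O, (↑y : CliffordAlgebra (QOne m QE)) = ϖ • z := by
    rintro ⟨z, hz, hyz⟩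
    apply hT'
    refine ⟨ϖ⁻¹ • T, ?_, by rw [smul_smul, mul_inv_cancel₀ hϖ0, one_smul]⟩
    intro w hw
    have hwS : ϖ⁻¹ • w ∈ S := by
      show ι (QOne m QE) (ϖ⁻¹ • w) * (↑y : CliffordAlgebra (QOne m QE)) ∈ clifLat1 m QE O
      rw [_root_.map_smul, hyz, smul_mul_assoc, mul_smul_comm, smul_smul,
        inv_mul_cancel₀ hϖ0, one_smul]
      exact mul_mem (ι_lat1_mem m QE O hw) hz
    have h2 := key2 _ hwS
    rw [QuadraticMap.polar_smul_right] at h2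
    rw [QuadraticMap.polar_smul_left]
    exact h2
  -- lam is integral
  have hlamO : lam ∈ O := by
    by_contra hl
    have h1 : 1 < abv lam := not_le.mp fun h => hl ((hO lam).mpr h)
    have h2 : (q : ℝ) ≤ abv lam := habv_ge lam hlam h1
    have ha : lam⁻¹ * ϖ⁻¹ ∈ O := by
      refine (hO _).mpr ?_
      rw [map_mul, map_inv₀, map_inv₀, habsϖ, inv_inv]
      rw [show (abv lam)⁻¹ * (q : ℝ) = (q : ℝ) / abv lam from by
        rw [div_eq_mul_inv, mul_comm]]
      rw [div_le_one (lt_trans zero_lt_one h1)]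
      exact h2
    apply hnodiv
    refine ⟨(lam⁻¹ * ϖ⁻¹) • (lam • (↑y : CliffordAlgebra (QOne m QE))),
      smul_mem_clifLat1 m QE O ha hy2, ?_⟩
    rw [smul_smul, smul_smul]
    rw [show ϖ * (lam⁻¹ * ϖ⁻¹) * lam = 1 from by field_simp; try ring]
    rw [one_smul]
  -- the conjugated vector is in the dual lattice
  have hinj : Function.Injective (ι (QOne m QE)) := clifAux_ι_injective (QOne m QE)
  have halg : Function.Injective (algebraMap F (CliffordAlgebra (QOne m QE))) :=
    clifAux_algebraMap_injective (QOne m QE)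
  choose c0 hc0 using hconj
  have hcLadd : ∀ v w, c0 (v + w) = c0 v + c0 w := by
    intro v w
    apply hinj
    rw [← hc0 (v + w)]
    have hsplit : ι (QOne m QE) (c0 v + c0 w)
        = ι (QOne m QE) (c0 v) + ι (QOne m QE) (c0 w) := map_add _ _ _
    rw [hsplit, ← hc0 v, ← hc0 w, map_add, mul_add, add_mul]
  have hcLsmul : ∀ (a : F) v, c0 (a • v) = a • c0 v := by
    intro a v
    apply hinj
    rw [← hc0 (a • v), _root_.map_smul, _root_.map_smul, ← hc0 v, mul_smul_comm,
      smul_mul_assoc]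
  let cL : ((Fin m → F × F) × E) →ₗ[F] ((Fin m → F × F) × E) :=
    { toFun := c0
      map_add' := hcLadd
      map_smul' := hcLsmul }
  have hcInj : Function.Injective cL := by
    intro v w h
    have h2 : ι (QOne m QE) (c0 v) = ι (QOne m QE) (c0 w) := congrArg _ h
    rw [← hc0 v, ← hc0 w] at h2
    have h3 := congrArg (fun a => (↑y : CliffordAlgebra (QOne m QE)) * a * ↑y⁻¹) h2
    simp only [mul_assoc, Units.mul_inv_cancel_left, Units.mul_inv, mul_one] at h3
    exact hinj h3
  have hcSurj : Function.Surjective cL := LinearMap.injective_iff_surjective.mp hcInj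
  refine ⟨⟨hy1, hnodiv⟩, hlamO, c0 T, ?_, hc0 T⟩
  intro v hv
  obtain ⟨xv, hxv⟩ := hcSurj v
  have hconj_xv : (↑y⁻¹ : CliffordAlgebra (QOne m QE)) * ι (QOne m QE) xv * ↑y
      = ι (QOne m QE) v := by
    rw [hc0 xv]
    exact congrArg _ hxv
  have hmul : ι (QOne m QE) xv * (↑y : CliffordAlgebra (QOne m QE))
      = ↑y * ι (QOne m QE) v := by
    rw [← hconj_xv, ← mul_assoc, ← mul_assoc, Units.mul_inv, one_mul]
  have hxvS : xv ∈ S := by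
    show ι (QOne m QE) xv * (↑y : CliffordAlgebra (QOne m QE)) ∈ clifLat1 m QE O
    rw [hmul]
    exact mul_mem hy1 (ι_lat1_mem m QE O hv)
  have hmid : ∀ a b : CliffordAlgebra (QOne m QE),
      ((↑y⁻¹ : CliffordAlgebra (QOne m QE)) * a * ↑y) * (↑y⁻¹ * b * ↑y)
        = ↑y⁻¹ * (a * b) * ↑y := by
    intro a b
    simp only [mul_assoc, Units.mul_inv_cancel_left]
  have hpol : QuadraticMap.polar (QOne m QE) (c0 T) v
      = QuadraticMap.polar (QOne m QE) T xv := by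
    apply halg
    calc algebraMap F (CliffordAlgebra (QOne m QE))
          (QuadraticMap.polar (QOne m QE) (c0 T) v)
        = ι (QOne m QE) (c0 T) * ι (QOne m QE) v
            + ι (QOne m QE) v * ι (QOne m QE) (c0 T) :=
          (CliffordAlgebra.ι_mul_ι_add_swap _ _).symm
      _ = ((↑y⁻¹ : CliffordAlgebra (QOne m QE)) * ι (QOne m QE) T * ↑y)
            * (↑y⁻¹ * ι (QOne m QE) xv * ↑y)
            + ((↑y⁻¹ : CliffordAlgebra (QOne m QE)) * ι (QOne m QE) xv * ↑y)
            * (↑y⁻¹ * ι (QOne m QE) T * ↑y) := by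
          rw [hc0 T, hconj_xv]
      _ = (↑y⁻¹ : CliffordAlgebra (QOne m QE))
            * (ι (QOne m QE) T * ι (QOne m QE) xv
              + ι (QOne m QE) xv * ι (QOne m QE) T) * ↑y := by
          rw [mul_add, add_mul, hmid, hmid]
      _ = (↑y⁻¹ : CliffordAlgebra (QOne m QE))
            * algebraMap F (CliffordAlgebra (QOne m QE))
                (QuadraticMap.polar (QOne m QE) T xv) * ↑y := by
          rw [CliffordAlgebra.ι_mul_ι_add_swap]
      _ = algebraMap F (CliffordAlgebra (QOne m QE))
            (QuadraticMap.polar (QOne m QE) T xv) := by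
          rw [mul_assoc, Algebra.commutes, ← mul_assoc, Units.inv_mul, one_mul]
  rw [hpol]
  exact key2 xv hxvS
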